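/- Let V be a finite-dimensional vector space over an algebraically closed field k of characteristic 0, and let T be a linear automorphism of V such that Tr(T) = 0 and the order of T equals q^n for some prime q and positive integer n. Then q divides dim(V). -/

import Mathlib

open Polynomial Matrix

lemma aux_charpoly_root_pow_eq_one {k : Type*} [Field k] {ι : Type*} [Fintype ι] [DecidableEq ι]
    {A : Matrix ι ι k} {m : ℕ} (hA : A ^ m = 1) {μ : k} (hμ : μ ∈ A.charpoly.roots) :
    μ ^ m = 1 := by
  have hroot : (A.charpoly).IsRoot μ := isRoot_of_mem_roots hμ
  have hdet : ((Matrix.scalar ι μ) - A).det = 0 := by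
    have h1 := _root_.eval_det (charmatrix A) μ
    rw [matPolyEquiv_charmatrix, Polynomial.eval_sub, Polynomial.eval_X, Polynomial.eval_C] at h1
    rw [← h1]
    exact hroot
  obtain ⟨v, hv0, hv⟩ := Matrix.exists_mulVec_eq_zero_iff.mpr hdet
  have hAv : A *ᵥ v = μ • v := by
    have := hv
    rw [Matrix.sub_mulVec] at this
    have hs : (Matrix.scalar ι μ) *ᵥ v = μ • v := by
      funext i
      simp [Matrix.scalar, Matrix.mulVec_diagonal]
    rw [hs, sub_eq_zero] at this
    exact this.symm
  have hpow : ∀ j : ℕ, (A ^ j) *ᵥ v = μ ^ j • v := by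
    intro j
    induction j with
    | zero => simp
    | succ j ih =>
      rw [pow_succ, ← Matrix.mulVec_mulVec, hAv, Matrix.mulVec_smul, ih,
        smul_smul, pow_succ, mul_comm]
  have hfin : v = μ ^ m • v := by
    have := hpow m
    rwa [hA, Matrix.one_mulVec] at this
  obtain ⟨i, hi⟩ := Function.ne_iff.mp hv0
  have h2 : μ ^ m * v i = 1 * v i := by
    rw [one_mul]; exact (congrFun hfin i).symm
  exact mul_right_cancel₀ hi h2

theorem stmt_0 (k : Type*) [Field k] [IsAlgClosed k] [CharZero k]
    (V : Type*) [AddCommGroup V] [Module k V] [FiniteDimensional k V]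
    (T : V ≃ₗ[k] V) (q n : ℕ) (hq : Nat.Prime q) (hn : 0 < n)
    (htr : LinearMap.trace k V (T : V →ₗ[k] V) = 0)
    (hord : orderOf T = q ^ n) :
    q ∣ Module.finrank k V := by
  classical
  set m := q ^ n with hm_def
  have hm : 0 < m := pow_pos hq.pos n
  haveI : NeZero ((m : k)) := ⟨Nat.cast_ne_zero.mpr hm.ne'⟩
  haveI : NeZero m := ⟨hm.ne'⟩
  haveI : Fact q.Prime := ⟨hq⟩
  set b := Module.finBasis k V with hb
  set f : V →ₗ[k] V := (T : V →ₗ[k] V) with hf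
  set A := LinearMap.toMatrix b b f with hA
  -- A ^ m = 1
  have hTm : T ^ m = 1 := by rw [← hord]; exact pow_orderOf_eq_one T
  have hfm : f ^ m = 1 := by
    ext v
    have h1 : (f ^ m) v = (⇑T)^[m] v := Module.End.pow_apply f m v
    have h2 : (T ^ m) v = (⇑T)^[m] v := LinearEquiv.pow_apply T m v
    rw [Module.End.one_apply, h1, ← h2, hTm]
    rfl
  have hAm : A ^ m = 1 := by
    rw [hA, LinearMap.toMatrix_pow, hfm, LinearMap.toMatrix_one]
  -- trace and roots
  set s := A.charpoly.roots with hs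
  have hsum : s.sum = 0 := by
    rw [hs, ← Matrix.trace_eq_sum_roots_charpoly, hA,
      ← LinearMap.trace_eq_matrix_trace k b f]
    exact htr
  have hcard : Multiset.card s = Module.finrank k V := by
    rw [hs, (Polynomial.splits_iff_card_roots).mp (IsAlgClosed.splits A.charpoly),
      Matrix.charpoly_natDegree_eq_dim, Fintype.card_fin]
  -- primitive root
  obtain ⟨ζ, hζ⟩ := HasEnoughRootsOfUnity.exists_primitiveRoot k m
  have hpow : ∀ μ ∈ s, ∃ i : ℕ, ζ ^ i = μ := by
    intro μ hμ
    obtain ⟨i, _, hi⟩ := hζ.eq_pow_of_pow_eq_one (aux_charpoly_root_pow_eq_one hAm hμ)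
    exact ⟨i, hi⟩
  set E : k → ℕ := fun μ => if h : ∃ i : ℕ, ζ ^ i = μ then h.choose else 0 with hE_def
  have hE : ∀ μ ∈ s, ζ ^ E μ = μ := by
    intro μ hμ
    have h := hpow μ hμ
    simp only [hE_def, dif_pos h]
    exact h.choose_spec
  set P : Polynomial ℤ := (s.map fun μ => (Polynomial.X : Polynomial ℤ) ^ E μ).sum with hP
  have haevP : Polynomial.aeval ζ P = 0 := by
    rw [hP, map_multiset_sum, Multiset.map_map]
    have : (s.map fun μ => Polynomial.aeval ζ ((Polynomial.X : Polynomial ℤ) ^ E μ))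
        = s.map id := by
      apply Multiset.map_congr rfl
      intro μ hμ
      simp only [map_pow, Polynomial.aeval_X, id_eq]
      exact hE μ hμ
    rw [show (Multiset.map ((Polynomial.aeval ζ) ∘ fun μ => (Polynomial.X : Polynomial ℤ) ^ E μ) s)
        = s.map fun μ => Polynomial.aeval ζ ((Polynomial.X : Polynomial ℤ) ^ E μ) from rfl,
      this, Multiset.map_id]
    exact hsum
  have hdvd : Polynomial.cyclotomic m ℤ ∣ P := by
    rw [Polynomial.cyclotomic_eq_minpoly hζ hm]
    exact minpoly.isIntegrallyClosed_dvd (hζ.isIntegral hm) haevP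
  obtain ⟨c, hc⟩ := hdvd
  have heval1 : P.eval 1 = (Multiset.card s : ℤ) := by
    rw [hP]
    rw [show (((s.map fun μ => (Polynomial.X : Polynomial ℤ) ^ E μ).sum).eval 1)
        = ((s.map fun μ => (Polynomial.X : Polynomial ℤ) ^ E μ).map (Polynomial.eval 1)).sum from
        (Polynomial.evalRingHom (1:ℤ)).map_multiset_sum _, Multiset.map_map]
    have : (s.map (Polynomial.eval 1 ∘ fun μ => (Polynomial.X : Polynomial ℤ) ^ E μ))
        = s.map fun _ => (1 : ℤ) := by
      apply Multiset.map_congr rfl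
      intro μ _
      simp
    rw [this, Multiset.map_const', Multiset.sum_replicate, nsmul_eq_mul, mul_one]
  have hq1 : (Polynomial.cyclotomic m ℤ).eval 1 = q := by
    rw [hm_def]
    obtain ⟨n', rfl⟩ : ∃ n', n = n' + 1 := ⟨n - 1, (Nat.succ_pred_eq_of_pos hn).symm⟩
    exact Polynomial.eval_one_cyclotomic_prime_pow (R := ℤ) (p := q) n' 
  have hdvd2 : (q : ℤ) ∣ (Module.finrank k V : ℤ) := by
    rw [← hcard, ← heval1, hc, Polynomial.eval_mul, hq1]
    exact Dvd.intro _ rfl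
  exact_mod_cast hdvd2
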